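/- Fix μ ∈ (0, 1/2], δ > 0, ε > 0 and α = μ(1−μ). For all r̂, R̂ ∈ ℝ and q̂₂, v̂₂ ∈ ℝ² with 1 + √(δ/ε) r̂ > 0 and all relevant denominators nonzero, the exact identity holds: ε · H̃_res^δ(r̂/√ε, R̂/√ε, q̂₂/ε², ε v̂₂) = −q̂₂×v̂₂ + ε³[ (1/2)|v̂₂|² − (1−μ)/|q̂₂ + με²(1,0)| − μ/|q̂₂ − (1−μ)ε²(1,0)| ] + (1/2)[R̂²/α + α r̂²] + (δε³/2)|v̂₂|² + f̂(r̂, q̂₂, v̂₂) + ĝ(r̂, q̂₂), where f̂(r̂, q̂₂, v̂₂) = [ (δ/ε)(q̂₂×v̂₂)² + (2√(δ/ε) r̂ + (δ/ε) r̂²)(2α q̂₂×v̂₂ − α² r̂²) ] / (2α(1 + √(δ/ε) r̂)²) and ĝ(r̂, q̂₂) = ε³[(1−μ)/|q̂₂ + με²(1,0)| − (1−μ)/|q̂₂ + με²(1 + √(δ/ε) r̂)(1,0)|] + ε³[μ/|q̂₂ − (1−μ)ε²(1,0)| − μ/|q̂₂ − (1−μ)ε²(1 + √(δ/ε) r̂)(1,0)|].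 -/

import Mathlib

open Real

noncomputable section

/-- The plane `ℝ²` with the Euclidean norm. -/
abbrev V2 : Type := EuclideanSpace ℝ (Fin 2)

def vec2 (a b : ℝ) : V2 := WithLp.toLp 2 ![a, b]

/-- Planar cross product `a×b = a₁b₂ − a₂b₁`. -/
def cross (a b : V2) : ℝ := a 0 * b 1 - a 1 * b 0

/-- The 3BP Hamiltonian in Hadjidemetriou rotating coordinates. -/
def Hrot (μ δ : ℝ) (r R Ω : ℝ) (q2 p2 : V2) : ℝ :=
  ((δ + 1) / (2 * δ)) * ‖p2‖ ^ 2
    - δ * ((1 - μ) / ‖q2 + r • vec2 μ 0‖ + μ / ‖q2 - r • vec2 (1 - μ) 0‖)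
    + R ^ 2 / (2 * (μ * (1 - μ)))
    + (Ω - cross q2 p2) ^ 2 / (2 * (μ * (1 - μ)) * r ^ 2)
    - (μ * (1 - μ)) / r

/-- The once-rescaled Hamiltonian
`H̃_res^δ(r̃, R̃, q₂, v₂) = (1/δ)[H_rot^δ(1 + √δ r̃, √δ R̃, Ω = α, q₂, δv₂) + α/2]`. -/
def Htil (μ δ : ℝ) (rt Rt : ℝ) (q2 v2 : V2) : ℝ :=
  (1 / δ) * (Hrot μ δ (1 + Real.sqrt δ * rt) (Real.sqrt δ * Rt) (μ * (1 - μ)) q2 (δ • v2)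
    + μ * (1 - μ) / 2)


lemma cross_smul_smul (a b : ℝ) (x y : V2) :
    cross (a • x) (b • y) = a * b * cross x y := by
  simp only [cross, PiLp.smul_apply, smul_eq_mul]; ring

lemma vec2_smul (a : ℝ) : a • vec2 1 0 = vec2 a 0 := by
  ext i; fin_cases i <;> simp [vec2]

lemma norm_inv_sq_smul (ε : ℝ) (hε : 0 < ε) (x : V2) :
    ‖(ε ^ 2)⁻¹ • x‖ = (ε ^ 2)⁻¹ * ‖x‖ := by
  rw [norm_smul, Real.norm_eq_abs, abs_of_pos (by positivity)]

/-- Exact decomposition of the twice-rescaled Hamiltonian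
`ε·H̃_res^δ(r̂/√ε, R̂/√ε, q̂₂/ε², εv̂₂)` into the leading part, the rotator, and the
remainder `(δε³/2)|v̂₂|² + f̂ + ĝ`. -/
theorem Htil_second_rescaling (μ δ ε : ℝ) (hμ : μ ∈ Set.Ioc (0 : ℝ) (1 / 2))
    (hδ : 0 < δ) (hε : 0 < ε) (rh Rh : ℝ) (qh vh : V2)
    (hr : 0 < 1 + Real.sqrt (δ / ε) * rh)
    (h1 : qh + (μ * ε ^ 2) • vec2 1 0 ≠ 0)
    (h2 : qh - ((1 - μ) * ε ^ 2) • vec2 1 0 ≠ 0)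
    (h3 : qh + (μ * ε ^ 2 * (1 + Real.sqrt (δ / ε) * rh)) • vec2 1 0 ≠ 0)
    (h4 : qh - ((1 - μ) * ε ^ 2 * (1 + Real.sqrt (δ / ε) * rh)) • vec2 1 0 ≠ 0) :
    let α := μ * (1 - μ)
    ε * Htil μ δ (rh / Real.sqrt ε) (Rh / Real.sqrt ε) ((ε ^ 2)⁻¹ • qh) (ε • vh) =
      -cross qh vh
        + ε ^ 3 * ((1 / 2) * ‖vh‖ ^ 2
            - (1 - μ) / ‖qh + (μ * ε ^ 2) • vec2 1 0‖
            - μ / ‖qh - ((1 - μ) * ε ^ 2) • vec2 1 0‖)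
        + (1 / 2) * (Rh ^ 2 / α + α * rh ^ 2)
        + (δ * ε ^ 3 / 2) * ‖vh‖ ^ 2
        + ((δ / ε) * (cross qh vh) ^ 2
            + (2 * Real.sqrt (δ / ε) * rh + (δ / ε) * rh ^ 2)
              * (2 * α * cross qh vh - α ^ 2 * rh ^ 2))
          / (2 * α * (1 + Real.sqrt (δ / ε) * rh) ^ 2)
        + (ε ^ 3 * ((1 - μ) / ‖qh + (μ * ε ^ 2) • vec2 1 0‖
              - (1 - μ) / ‖qh + (μ * ε ^ 2 * (1 + Real.sqrt (δ / ε) * rh)) • vec2 1 0‖)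
           + ε ^ 3 * (μ / ‖qh - ((1 - μ) * ε ^ 2) • vec2 1 0‖
              - μ / ‖qh - ((1 - μ) * ε ^ 2 * (1 + Real.sqrt (δ / ε) * rh)) • vec2 1 0‖)) := by
  intro α
  have hα : α = μ * (1 - μ) := rfl
  clear_value α
  subst hα
  obtain ⟨hμ0, hμ2⟩ := hμ
  have hμ1 : 0 < 1 - μ := by linarith
  have hA : (0:ℝ) < μ * (1 - μ) := by positivity
  set s := Real.sqrt (δ / ε) with hs
  have hs0 : 0 < s := Real.sqrt_pos.mpr (by positivity)
  have hs2 : s ^ 2 = δ / ε := Real.sq_sqrt (by positivity)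
  have hδeq : δ = s ^ 2 * ε := by rw [hs2]; field_simp
  have hsε : (0:ℝ) < Real.sqrt ε := Real.sqrt_pos.mpr hε
  have hsd : Real.sqrt δ = s * Real.sqrt ε := by
    rw [hs, Real.sqrt_div hδ.le, div_mul_cancel₀ _ (ne_of_gt hsε)]
  have hr1 : Real.sqrt δ * (rh / Real.sqrt ε) = s * rh := by
    rw [hsd]; field_simp
  have hr2 : Real.sqrt δ * (Rh / Real.sqrt ε) = s * Rh := by
    rw [hsd]; field_simp
  have key3 : (ε ^ 2)⁻¹ • qh + (1 + s * rh) • vec2 μ 0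
      = (ε ^ 2)⁻¹ • (qh + (μ * ε ^ 2 * (1 + s * rh)) • vec2 1 0) := by
    rw [smul_add, smul_smul]
    congr 1
    rw [← vec2_smul μ, smul_smul]
    congr 1
    field_simp
  have key4 : (ε ^ 2)⁻¹ • qh - (1 + s * rh) • vec2 (1 - μ) 0
      = (ε ^ 2)⁻¹ • (qh - ((1 - μ) * ε ^ 2 * (1 + s * rh)) • vec2 1 0) := by
    rw [smul_sub, smul_smul]
    congr 1
    rw [← vec2_smul (1 - μ), smul_smul]
    congr 1
    field_simp
  have hN3 : 0 < ‖qh + (μ * ε ^ 2 * (1 + s * rh)) • vec2 1 0‖ := norm_pos_iff.mpr h3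
  have hN4 : 0 < ‖qh - ((1 - μ) * ε ^ 2 * (1 + s * rh)) • vec2 1 0‖ := norm_pos_iff.mpr h4
  have hN1 : 0 < ‖qh + (μ * ε ^ 2) • vec2 1 0‖ := norm_pos_iff.mpr h1
  have hN2 : 0 < ‖qh - ((1 - μ) * ε ^ 2) • vec2 1 0‖ := norm_pos_iff.mpr h2
  have hnp : ‖δ • ε • vh‖ = δ * ε * ‖vh‖ := by
    rw [norm_smul, norm_smul, Real.norm_eq_abs, Real.norm_eq_abs,
      abs_of_pos hδ, abs_of_pos hε, mul_assoc]
  have hcr : cross ((ε ^ 2)⁻¹ • qh) (δ • ε • vh) = (ε ^ 2)⁻¹ * (δ * ε) * cross qh vh := by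
    rw [smul_smul, cross_smul_smul]
  simp only [Htil, Hrot, hr1, hr2, key3, key4, hnp, hcr,
    norm_inv_sq_smul ε hε]
  rw [hδeq]
  have h1r : (0:ℝ) < 1 + s * rh := hr
  field_simp
  ring
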